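/- Let G be a finite DAG with n nodes and let L ∈ ℤ⁺ be such that every SPP pebbling strategy of G with memory bound k·r uses at least L I/O moves. Then every MPP pebbling strategy of G with k processors, memory bound r per processor and I/O cost g has total cost at least g·L/k + n/k. -/

import Mathlib

open scoped Classical

/-- A relation is a DAG edge relation if its transitive closure is irreflexive
(i.e., the directed graph is acyclic). -/
def IsDag {V : Type*} (E : V → V → Prop) : Prop := Irreflexive (Relation.TransGen E)

namespace MPP

variable {V : Type*} [DecidableEq V] {k : ℕ}

/-- A configuration of multiprocessor red-blue pebbling: a set of red pebbles
for each of the `k` processors, and a set of blue pebbles. -/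
structure Conf (V : Type*) (k : ℕ) where
  red : Fin k → Finset V
  blue : Finset V

/-- Moves of multiprocessor red-blue pebbling. `save`/`load` are the parallel I/O
moves (R1-M)/(R2-M), `compute` is (R3-M), and the removals are (R4-M). -/
inductive Move (V : Type*) (k : ℕ) where
  | save (m : ℕ) (f : Fin m → Fin k) (v : Fin m → V)
  | load (m : ℕ) (f : Fin m → Fin k) (v : Fin m → V)
  | compute (m : ℕ) (f : Fin m → Fin k) (v : Fin m → V)
  | removeRed (j : Fin k) (x : V)
  | removeBlue (x : V)

/-- Add, for each `i`, the node `v i` to the red pebbles of processor `f i`. -/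
def addRed (C : Conf V k) {m : ℕ} (f : Fin m → Fin k) (v : Fin m → V) :
    Fin k → Finset V :=
  fun j => C.red j ∪ (Finset.univ.filter (fun i => f i = j)).image v

/-- The effect of a move on a configuration. -/
def apply : Move V k → Conf V k → Conf V k
  | .save _ _ v, C => ⟨C.red, C.blue ∪ Finset.univ.image v⟩
  | .load _ f v, C => ⟨addRed C f v, C.blue⟩
  | .compute _ f v, C => ⟨addRed C f v, C.blue⟩
  | .removeRed j x, C => ⟨Function.update C.red j (C.red j \ {x}), C.blue⟩
  | .removeBlue x, C => ⟨C.red, C.blue \ {x}⟩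

/-- When a move may legally be performed in a given configuration. -/
def Legal (E : V → V → Prop) : Conf V k → Move V k → Prop
  | C, .save m f v => m ≤ k ∧ Function.Injective f ∧ ∀ i, v i ∈ C.red (f i)
  | C, .load m f v => m ≤ k ∧ Function.Injective f ∧ ∀ i, v i ∈ C.blue
  | C, .compute m f v =>
      m ≤ k ∧ Function.Injective f ∧ ∀ i, ∀ u, E u (v i) → u ∈ C.red (f i)
  | _, .removeRed _ _ => True
  | _, .removeBlue _ => True

/-- A configuration respects the fast-memory bound `r` for every processor. -/
def Valid (r : ℕ) (C : Conf V k) : Prop := ∀ j, (C.red j).card ≤ r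

/-- `Run E r C ms C'` : starting from configuration `C`, the list of moves `ms`
may be legally executed (respecting the memory bound `r` throughout) and leads
to configuration `C'`. -/
inductive Run (E : V → V → Prop) (r : ℕ) : Conf V k → List (Move V k) → Conf V k → Prop
  | nil (C : Conf V k) : Run E r C [] C
  | cons {C C'' : Conf V k} {mv : Move V k} {ms : List (Move V k)} :
      Legal E C mv → Valid r (apply mv C) → Run E r (apply mv C) ms C'' →
      Run E r C (mv :: ms) C''

/-- Cost of a single move: `g` for I/O, `1` for compute, `0` for removal. -/
def moveCost (g : ℕ) : Move V k → ℕ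
  | .save .. => g
  | .load .. => g
  | .compute .. => 1
  | .removeRed .. => 0
  | .removeBlue .. => 0

/-- Total cost of a sequence of moves. -/
def cost (g : ℕ) (ms : List (Move V k)) : ℕ := (ms.map (moveCost g)).sum

def isIO : Move V k → Bool
  | .save .. => true
  | .load .. => true
  | _ => false

/-- The number of I/O moves in a sequence of moves. -/
def ioCount (ms : List (Move V k)) : ℕ := (ms.filter isIO).length

def isCompute : Move V k → Bool
  | .compute .. => true
  | _ => false

/-- The number of compute moves in a sequence of moves. -/
def computeCount (ms : List (Move V k)) : ℕ := (ms.filter isCompute).length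

/-- A sink of the DAG: a node with no outgoing edge. -/
def IsSink (E : V → V → Prop) (v : V) : Prop := ∀ u, ¬ E v u

/-- A terminal configuration: every sink carries at least one pebble. -/
def Terminal (E : V → V → Prop) (C : Conf V k) : Prop :=
  ∀ v, IsSink E v → v ∈ C.blue ∨ ∃ j, v ∈ C.red j

/-- The initial (all-empty) configuration. -/
def init (V : Type*) (k : ℕ) : Conf V k := ⟨fun _ => ∅, ∅⟩

/-- `ms` is a pebbling strategy: a legal run from the empty configuration ending
in a terminal configuration. -/
def IsPebbling (E : V → V → Prop) (r : ℕ) (ms : List (Move V k)) : Prop :=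
  ∃ Cf, Run E r (init V k) ms Cf ∧ Terminal E Cf

/-- The optimal (minimum) cost of a pebbling strategy with `k` processors,
memory bound `r` per processor, and I/O cost `g`. -/
noncomputable def optCost (E : V → V → Prop) (k r g : ℕ) : ℕ :=
  sInf {c | ∃ ms : List (Move V k), IsPebbling E r ms ∧ cost g ms = c}

/-- The minimum number of I/O moves among all minimum-cost pebbling strategies. -/
noncomputable def optIO (E : V → V → Prop) (k r g : ℕ) : ℕ :=
  sInf {q | ∃ ms : List (Move V k),
    IsPebbling E r ms ∧ cost g ms = optCost E k r g ∧ ioCount ms = q}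

/-- The maximum in-degree `Δ_in` of the DAG. -/
noncomputable def maxInDeg (E : V → V → Prop) [Fintype V] : ℕ :=
  Finset.univ.sup fun v => (Finset.univ.filter fun u => E u v).card

/-- The set of nodes computed by a move. -/
def computes : Move V k → Set V
  | .compute _ _ v => Set.range v
  | _ => ∅

/-- `x` is computed by the move at position `s` of `ms`. -/
def ComputedAt (ms : List (Move V k)) (s : ℕ) (x : V) : Prop :=
  ∃ mv, ms[s]? = some mv ∧ x ∈ computes mv

/-- The set of nodes computed by some move strictly before position `t`. -/
def computedBefore (ms : List (Move V k)) (t : ℕ) : Set V :=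
  {x | ∃ s < t, ComputedAt ms s x}

/-- `x` is ready at position `t`: it has not yet been computed, but all its
in-neighbors have been. -/
def Ready (E : V → V → Prop) (ms : List (Move V k)) (t : ℕ) (x : V) : Prop :=
  x ∉ computedBefore ms t ∧ ∀ u, E u x → u ∈ computedBefore ms t

/-- The number of nodes that are ready at position `t`. -/
noncomputable def readyCount (E : V → V → Prop) [Fintype V]
    (ms : List (Move V k)) (t : ℕ) : ℕ :=
  (Finset.univ.filter (Ready E ms t)).card

end MPP

namespace SPP

variable {V : Type*} [DecidableEq V]

/-- A configuration of single-processor red-blue pebbling. -/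
structure Conf (V : Type*) where
  red : Finset V
  blue : Finset V

/-- Moves of single-processor red-blue pebbling: `load` is (R1-S), `save` is
(R2-S), `compute` is (R3-S), and the removals are (R4-S). -/
inductive Move (V : Type*) where
  | load (v : V)
  | save (v : V)
  | compute (v : V)
  | removeRed (v : V)
  | removeBlue (v : V)

/-- The effect of a move on a configuration. -/
def apply : Move V → Conf V → Conf V
  | .load v, C => ⟨insert v C.red, C.blue⟩
  | .save v, C => ⟨C.red, insert v C.blue⟩
  | .compute v, C => ⟨insert v C.red, C.blue⟩
  | .removeRed v, C => ⟨C.red.erase v, C.blue⟩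
  | .removeBlue v, C => ⟨C.red, C.blue.erase v⟩

/-- When a move may legally be performed. -/
def Legal (E : V → V → Prop) : Conf V → Move V → Prop
  | C, .load v => v ∈ C.blue
  | C, .save v => v ∈ C.red
  | C, .compute v => ∀ u, E u v → u ∈ C.red
  | _, .removeRed _ => True
  | _, .removeBlue _ => True

/-- A configuration respects the fast-memory bound `r`. -/
def Valid (r : ℕ) (C : Conf V) : Prop := C.red.card ≤ r

/-- `Run E r C ms C'` : starting from configuration `C`, the list of moves `ms`
may be legally executed (respecting the memory bound `r` throughout) and leads
to configuration `C'`. -/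
inductive Run (E : V → V → Prop) (r : ℕ) : Conf V → List (Move V) → Conf V → Prop
  | nil (C : Conf V) : Run E r C [] C
  | cons {C C'' : Conf V} {mv : Move V} {ms : List (Move V)} :
      Legal E C mv → Valid r (apply mv C) → Run E r (apply mv C) ms C'' →
      Run E r C (mv :: ms) C''

def isIO : Move V → Bool
  | .load _ => true
  | .save _ => true
  | _ => false

/-- The number of I/O moves (of type (R1-S) or (R2-S)) in a sequence of moves. -/
def ioCount (ms : List (Move V)) : ℕ := (ms.filter isIO).length

def isComputeOrRemove : Move V → Bool
  | .compute _ => true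
  | .removeRed _ => true
  | .removeBlue _ => true
  | _ => false

/-- A sink of the DAG: a node with no outgoing edge. -/
def IsSink (E : V → V → Prop) (v : V) : Prop := ∀ u, ¬ E v u

/-- A terminal configuration: every sink carries a pebble. -/
def Terminal (E : V → V → Prop) (C : Conf V) : Prop :=
  ∀ v, IsSink E v → v ∈ C.blue ∨ v ∈ C.red

/-- The initial (empty) configuration. -/
def init (V : Type*) : Conf V := ⟨∅, ∅⟩

/-- `ms` is an SPP pebbling strategy with memory bound `r`. -/
def IsPebbling (E : V → V → Prop) (r : ℕ) (ms : List (Move V)) : Prop :=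
  ∃ Cf, Run E r (init V) ms Cf ∧ Terminal E Cf

end SPP

section AuxLemmas

namespace SPP

variable {V : Type*} [DecidableEq V] {E : V → V → Prop} {r : ℕ}

lemma Run.append {C C' C'' : Conf V} {l1 l2 : List (Move V)}
    (h1 : Run E r C l1 C') (h2 : Run E r C' l2 C'') : Run E r C (l1 ++ l2) C'' := by
  induction h1 with
  | nil => exact h2
  | cons hleg hval _ ih => exact Run.cons hleg hval (ih h2)

lemma ioCount_append (l1 l2 : List (Move V)) :
    ioCount (l1 ++ l2) = ioCount l1 + ioCount l2 := by
  simp [ioCount, List.filter_append]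

lemma ioCount_map_save (l : List V) : ioCount (l.map Move.save) = l.length := by
  induction l with
  | nil => simp [ioCount]
  | cons a t ih => simp only [List.map_cons, ioCount, List.filter_cons, isIO] at *; simp [ih]

lemma ioCount_map_load (l : List V) : ioCount (l.map Move.load) = l.length := by
  induction l with
  | nil => simp [ioCount]
  | cons a t ih => simp only [List.map_cons, ioCount, List.filter_cons, isIO] at *; simp [ih]

lemma ioCount_map_compute (l : List V) : ioCount (l.map Move.compute) = 0 := by
  induction l with
  | nil => simp [ioCount]
  | cons a t ih => simp only [List.map_cons, ioCount, List.filter_cons, isIO] at *; simp [ih]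

lemma run_loads (B K : Finset V) (hK : K.card ≤ r) :
    ∀ (l : List V) (R : Finset V), (∀ x ∈ l, x ∈ B) → R ∪ l.toFinset ⊆ K →
      Run E r ⟨R, B⟩ (l.map Move.load) ⟨R ∪ l.toFinset, B⟩ := by
  intro l
  induction l with
  | nil => intro R _ _; simpa using Run.nil (E := E) (r := r) ⟨R, B⟩
  | cons x t ih =>
    intro R hB hsub
    have hx : insert x R ∪ t.toFinset ⊆ K := by
      intro y hy
      apply hsub
      simp only [Finset.mem_union, Finset.mem_insert, List.toFinset_cons] at hy ⊢
      tauto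
    have hval : Valid r (apply (Move.load x) ⟨R, B⟩) := by
      have : insert x R ⊆ K := fun y hy => hx (Finset.mem_union_left _ hy)
      exact le_trans (Finset.card_le_card this) hK
    have hrun := ih (insert x R) (fun y hy => hB y (List.mem_cons_of_mem _ hy)) hx
    have heq : insert x R ∪ t.toFinset = R ∪ (x :: t).toFinset := by
      simp [List.toFinset_cons, Finset.insert_union, Finset.union_insert]
    rw [heq] at hrun
    exact Run.cons (by exact hB x (List.mem_cons_self)) hval hrun

lemma run_computes (B K R0 : Finset V) (hK : K.card ≤ r) :
    ∀ (l : List V) (R : Finset V), R0 ⊆ R → (∀ x ∈ l, ∀ u, E u x → u ∈ R0) →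
      R ∪ l.toFinset ⊆ K →
      Run E r ⟨R, B⟩ (l.map Move.compute) ⟨R ∪ l.toFinset, B⟩ := by
  intro l
  induction l with
  | nil => intro R _ _ _; simpa using Run.nil (E := E) (r := r) ⟨R, B⟩
  | cons x t ih =>
    intro R hR0 hE hsub
    have hx : insert x R ∪ t.toFinset ⊆ K := by
      intro y hy
      apply hsub
      simp only [Finset.mem_union, Finset.mem_insert, List.toFinset_cons] at hy ⊢
      tauto
    have hval : Valid r (apply (Move.compute x) ⟨R, B⟩) := by
      have : insert x R ⊆ K := fun y hy => hx (Finset.mem_union_left _ hy)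
      exact le_trans (Finset.card_le_card this) hK
    have hrun := ih (insert x R) (hR0.trans (Finset.subset_insert _ _))
      (fun y hy => hE y (List.mem_cons_of_mem _ hy)) hx
    have heq : insert x R ∪ t.toFinset = R ∪ (x :: t).toFinset := by
      simp [List.toFinset_cons, Finset.insert_union, Finset.union_insert]
    rw [heq] at hrun
    refine Run.cons ?_ hval hrun
    exact fun u hu => hR0 (hE x (List.mem_cons_self) u hu)

lemma run_saves (R : Finset V) (hR : R.card ≤ r) :
    ∀ (l : List V) (B : Finset V), (∀ x ∈ l, x ∈ R) →
      Run E r ⟨R, B⟩ (l.map Move.save) ⟨R, B ∪ l.toFinset⟩ := by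
  intro l
  induction l with
  | nil => intro B _; simpa using Run.nil (E := E) (r := r) ⟨R, B⟩
  | cons x t ih =>
    intro B hB
    have hrun := ih (insert x B) (fun y hy => hB y (List.mem_cons_of_mem _ hy))
    have heq : insert x B ∪ t.toFinset = B ∪ (x :: t).toFinset := by
      simp [List.toFinset_cons, Finset.insert_union, Finset.union_insert]
    rw [heq] at hrun
    exact Run.cons (by exact hB x (List.mem_cons_self)) hR hrun

end SPP

namespace MPP

variable {V : Type*} [DecidableEq V] {k : ℕ} {E : V → V → Prop} {r : ℕ}

/-- Union of all processors' red pebbles. -/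
def allRed (C : Conf V k) : Finset V := Finset.univ.biUnion C.red

/-- All pebbled nodes. -/
def pebbled (C : Conf V k) : Finset V := allRed C ∪ C.blue

lemma allRed_card {C : Conf V k} (hC : Valid r C) : (allRed C).card ≤ k * r := by
  calc (allRed C).card ≤ ∑ j : Fin k, (C.red j).card := Finset.card_biUnion_le
    _ ≤ ∑ _j : Fin k, r := Finset.sum_le_sum (fun j _ => hC j)
    _ = k * r := by simp [Finset.sum_const, mul_comm]

lemma allRed_addRed (C : Conf V k) {m : ℕ} (f : Fin m → Fin k) (v : Fin m → V) :
    Finset.univ.biUnion (addRed C f v) = allRed C ∪ Finset.image v Finset.univ := by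
  ext x
  simp only [allRed, addRed, Finset.mem_biUnion, Finset.mem_union, Finset.mem_image,
    Finset.mem_filter, Finset.mem_univ, true_and]
  constructor
  · rintro ⟨j, h | ⟨i, hfi, hvi⟩⟩
    · exact Or.inl ⟨j, h⟩
    · exact Or.inr ⟨i, hvi⟩
  · rintro (⟨j, h⟩ | ⟨i, hvi⟩)
    · exact ⟨j, Or.inl h⟩
    · exact ⟨f i, Or.inr ⟨i, rfl, hvi⟩⟩

lemma toFinset_ofFn {m : ℕ} (v : Fin m → V) :
    (List.ofFn v).toFinset = Finset.image v Finset.univ := by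
  ext x
  simp [List.mem_ofFn, eq_comm]

lemma mem_allRed {C : Conf V k} {j : Fin k} {x : V} (h : x ∈ C.red j) : x ∈ allRed C :=
  Finset.mem_biUnion.2 ⟨j, Finset.mem_univ _, h⟩

lemma ioCount_cons (mv : Move V k) (t : List (Move V k)) :
    ioCount (mv :: t) = (if isIO mv then 1 else 0) + ioCount t := by
  simp only [ioCount, List.filter_cons]
  split <;> simp [Nat.add_comm]

/-- Simulation of an MPP run by an SPP run with memory `k * r`. -/
lemma sim_run {C C' : Conf V k} {ms : List (Move V k)} (h : Run E r C ms C') :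
    ∃ ss : List (SPP.Move V),
      SPP.Run E (k * r) ⟨allRed C, C.blue⟩ ss ⟨allRed C', C'.blue⟩ ∧
      SPP.ioCount ss ≤ k * ioCount ms := by
  induction h with
  | nil => exact ⟨[], SPP.Run.nil _, by simp [ioCount, SPP.ioCount]⟩
  | @cons C C'' mv ms' hleg hval _ ih =>
    obtain ⟨ss, hss, hio⟩ := ih
    have step : ∃ piece : List (SPP.Move V),
        SPP.Run E (k * r) ⟨allRed C, C.blue⟩ piece
          ⟨allRed (apply mv C), (apply mv C).blue⟩ ∧
        SPP.ioCount piece ≤ (if isIO mv then k else 0) := by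
      cases mv with
      | save m f v =>
        obtain ⟨hm, hinj, hv⟩ := hleg
        have hcard : (allRed C).card ≤ k * r := allRed_card (C := apply (.save m f v) C) hval
        have hrun := SPP.run_saves (E := E) (allRed C) hcard (List.ofFn v) C.blue
          (fun x hx => by
            obtain ⟨i, rfl⟩ := List.mem_ofFn.1 hx
            exact mem_allRed (hv i))
        refine ⟨(List.ofFn v).map SPP.Move.save, ?_, ?_⟩
        · convert hrun using 2 <;>
          simp [apply, allRed, toFinset_ofFn]
        · have h : SPP.ioCount ((List.ofFn v).map SPP.Move.save) = m := by
            rw [SPP.ioCount_map_save, List.length_ofFn]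
          simp only [isIO, if_pos, h]
          omega
      | load m f v =>
        obtain ⟨hm, hinj, hv⟩ := hleg
        have hcard : (Finset.univ.biUnion (addRed C f v)).card ≤ k * r :=
          allRed_card (C := apply (.load m f v) C) hval
        have hsub : allRed C ∪ (List.ofFn v).toFinset ⊆ Finset.univ.biUnion (addRed C f v) := by
          rw [toFinset_ofFn, allRed_addRed]
        have hrun := SPP.run_loads (E := E) C.blue _ hcard (List.ofFn v) (allRed C)
          (fun x hx => by
            obtain ⟨i, rfl⟩ := List.mem_ofFn.1 hx
            exact hv i) hsub
        refine ⟨(List.ofFn v).map SPP.Move.load, ?_, ?_⟩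
        · convert hrun using 2 <;>
          simp [apply, allRed, allRed_addRed, toFinset_ofFn]
        · have h : SPP.ioCount ((List.ofFn v).map SPP.Move.load) = m := by
            rw [SPP.ioCount_map_load, List.length_ofFn]
          simp only [isIO, if_pos, h]
          omega
      | compute m f v =>
        obtain ⟨hm, hinj, hv⟩ := hleg
        have hcard : (Finset.univ.biUnion (addRed C f v)).card ≤ k * r :=
          allRed_card (C := apply (.compute m f v) C) hval
        have hsub : allRed C ∪ (List.ofFn v).toFinset ⊆ Finset.univ.biUnion (addRed C f v) := by
          rw [toFinset_ofFn, allRed_addRed]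
        have hrun := SPP.run_computes (E := E) C.blue _ (allRed C) hcard (List.ofFn v)
          (allRed C) subset_rfl
          (fun x hx u hu => by
            obtain ⟨i, rfl⟩ := List.mem_ofFn.1 hx
            exact mem_allRed (hv i u hu)) hsub
        refine ⟨(List.ofFn v).map SPP.Move.compute, ?_, ?_⟩
        · convert hrun using 2 <;>
          simp [apply, allRed, allRed_addRed, toFinset_ofFn]
        · rw [SPP.ioCount_map_compute]
          simp [isIO]
      | removeRed j x =>
        set A := allRed C with hA
        set A' := allRed (apply (.removeRed j x) C) with hA'
        have hsub1 : A.erase x ⊆ A' := by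
          intro y hy
          obtain ⟨hne, hy⟩ := Finset.mem_erase.1 hy
          obtain ⟨j', _, hj'⟩ := Finset.mem_biUnion.1 hy
          apply Finset.mem_biUnion.2 ⟨j', Finset.mem_univ _, ?_⟩
          show y ∈ Function.update C.red j (C.red j \ {x}) j'
          rw [Function.update_apply]
          by_cases h : j' = j
          · rw [if_pos h]
            subst h
            exact Finset.mem_sdiff.2 ⟨hj', by simp [hne]⟩
          · rw [if_neg h]; exact hj'
        have hsub2 : A' ⊆ A := by
          intro y hy
          obtain ⟨j', _, hj'⟩ := Finset.mem_biUnion.1 hy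
          apply Finset.mem_biUnion.2 ⟨j', Finset.mem_univ _, ?_⟩
          have hj'' : y ∈ Function.update C.red j (C.red j \ {x}) j' := hj'
          rw [Function.update_apply] at hj''
          by_cases h : j' = j
          · rw [if_pos h] at hj''; rw [h]; exact (Finset.mem_sdiff.1 hj'').1
          · rw [if_neg h] at hj''; exact hj''
        have hAcard : A'.card ≤ k * r := allRed_card hval
        by_cases hxA : x ∈ A'
        · have heq : A' = A := by
            apply Finset.Subset.antisymm hsub2
            intro y hy
            by_cases hyx : y = x
            · exact hyx ▸ hxA
            · exact hsub1 (Finset.mem_erase.2 ⟨hyx, hy⟩)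
          refine ⟨[], ?_, by simp [SPP.ioCount]⟩
          have : (apply (.removeRed j x) C).blue = C.blue := rfl
          rw [this, heq]
          exact SPP.Run.nil _
        · have heq : A' = A.erase x := by
            apply Finset.Subset.antisymm _ hsub1
            intro y hy
            refine Finset.mem_erase.2 ⟨fun h => hxA (h ▸ hy), hsub2 hy⟩
          refine ⟨[SPP.Move.removeRed x], ?_, by simp [SPP.ioCount, SPP.isIO]⟩
          have hrun : SPP.Run E (k * r) (SPP.apply (.removeRed x) ⟨A, C.blue⟩) []
              ⟨A', (apply (.removeRed j x) C).blue⟩ := by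
            have : (apply (.removeRed j x) C).blue = C.blue := rfl
            rw [this]
            have : SPP.apply (.removeRed x) (⟨A, C.blue⟩ : SPP.Conf V) = ⟨A.erase x, C.blue⟩ := rfl
            rw [this, ← heq]
            exact SPP.Run.nil _
          refine SPP.Run.cons trivial ?_ hrun
          show (A.erase x).card ≤ k * r
          rw [← heq]; exact hAcard
      | removeBlue x =>
        have hAcard : (allRed C).card ≤ k * r := allRed_card (C := C) ?_
        · refine ⟨[SPP.Move.removeBlue x], ?_, by simp [SPP.ioCount, SPP.isIO]⟩
          have h1 : allRed (apply (.removeBlue x) C) = allRed C := rfl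
          have h2 : (apply (.removeBlue x) C).blue = C.blue.erase x := by
            simp [apply, Finset.erase_eq]
          rw [h1, h2]
          have : SPP.apply (.removeBlue x) (⟨allRed C, C.blue⟩ : SPP.Conf V)
              = ⟨allRed C, C.blue.erase x⟩ := rfl
          refine SPP.Run.cons trivial ?_ (this ▸ SPP.Run.nil _)
          show (allRed C).card ≤ k * r
          exact hAcard
        · exact hval
    obtain ⟨piece, hpiece, hpio⟩ := step
    refine ⟨piece ++ ss, hpiece.append hss, ?_⟩
    rw [SPP.ioCount_append, ioCount_cons, Nat.mul_add]
    have hdist : k * (if isIO mv then 1 else 0) = (if isIO mv then k else 0) := by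
      split <;> simp
    rw [hdist]
    omega

lemma computeCount_cons (mv : Move V k) (t : List (Move V k)) :
    computeCount (mv :: t) = (if isCompute mv then 1 else 0) + computeCount t := by
  simp only [computeCount, List.filter_cons]
  split <;> simp [Nat.add_comm]

lemma pebbled_key {C C' : Conf V k} {ms : List (Move V k)} (h : Run E r C ms C') :
    ∃ T : Finset V, T.card ≤ k * computeCount ms ∧ pebbled C' ⊆ pebbled C ∪ T ∧
      ∀ x ∈ T, ∀ u, E u x → u ∈ pebbled C ∪ T := by
  induction h with
  | nil => exact ⟨∅, by simp, by simp [Finset.union_empty], by simp⟩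
  | @cons C C'' mv ms' hleg hval _ ih =>
    obtain ⟨T', hT'card, hT'sub, hT'cl⟩ := ih
    cases mv with
    | compute m f v =>
      obtain ⟨hm, hinj, hv⟩ := hleg
      refine ⟨T' ∪ Finset.image v Finset.univ, ?_, ?_, ?_⟩
      · calc (T' ∪ Finset.image v Finset.univ).card
            ≤ T'.card + (Finset.image v Finset.univ).card := Finset.card_union_le _ _
          _ ≤ k * computeCount ms' + m :=
              add_le_add hT'card (le_trans Finset.card_image_le (by simp))
          _ ≤ k * computeCount ms' + k := by omega
          _ = k * computeCount (Move.compute m f v :: ms') := by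
              rw [computeCount_cons]; simp [isCompute]; ring
      · have hpa : pebbled (apply (.compute m f v) C)
            ⊆ pebbled C ∪ Finset.image v Finset.univ := by
          intro y hy
          simp only [pebbled] at hy ⊢
          rcases Finset.mem_union.1 hy with hy | hy
          · rw [show allRed (apply (.compute m f v) C) = Finset.univ.biUnion (addRed C f v) from rfl,
              allRed_addRed] at hy
            rcases Finset.mem_union.1 hy with hy | hy
            · exact Finset.mem_union_left _ (Finset.mem_union_left _ hy)
            · exact Finset.mem_union_right _ hy
          · exact Finset.mem_union_left _ (Finset.mem_union_right _ hy)
        intro y hy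
        rcases Finset.mem_union.1 (hT'sub hy) with hy' | hy'
        · rcases Finset.mem_union.1 (hpa hy') with h1 | h1
          · exact Finset.mem_union_left _ h1
          · exact Finset.mem_union_right _ (Finset.mem_union_right _ h1)
        · exact Finset.mem_union_right _ (Finset.mem_union_left _ hy')
      · intro x hx u hu
        rcases Finset.mem_union.1 hx with hx | hx
        · have := hT'cl x hx u hu
          rcases Finset.mem_union.1 this with h1 | h1
          · have hpa : pebbled (apply (.compute m f v) C)
                ⊆ pebbled C ∪ Finset.image v Finset.univ := by
              intro y hy
              simp only [pebbled] at hy ⊢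
              rcases Finset.mem_union.1 hy with hy | hy
              · rw [show allRed (apply (.compute m f v) C) = Finset.univ.biUnion (addRed C f v) from rfl,
                  allRed_addRed] at hy
                rcases Finset.mem_union.1 hy with hy | hy
                · exact Finset.mem_union_left _ (Finset.mem_union_left _ hy)
                · exact Finset.mem_union_right _ hy
              · exact Finset.mem_union_left _ (Finset.mem_union_right _ hy)
            rcases Finset.mem_union.1 (hpa h1) with h2 | h2
            · exact Finset.mem_union_left _ h2
            · exact Finset.mem_union_right _ (Finset.mem_union_right _ h2)
          · exact Finset.mem_union_right _ (Finset.mem_union_left _ h1)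
        · obtain ⟨i, _, rfl⟩ := Finset.mem_image.1 hx
          exact Finset.mem_union_left _
            (Finset.mem_union_left _ (mem_allRed (hv i u hu)))
    | save m f v =>
      obtain ⟨hm, hinj, hv⟩ := hleg
      have hpa : pebbled (apply (.save m f v) C) ⊆ pebbled C := by
        intro y hy
        simp only [pebbled] at hy ⊢
        rcases Finset.mem_union.1 hy with hy | hy
        · exact Finset.mem_union_left _ hy
        · rcases Finset.mem_union.1 hy with hy | hy
          · exact Finset.mem_union_right _ hy
          · obtain ⟨i, _, rfl⟩ := Finset.mem_image.1 hy
            exact Finset.mem_union_left _ (mem_allRed (hv i))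
      refine ⟨T', ?_, ?_, ?_⟩
      · rw [computeCount_cons]; simpa [isCompute] using hT'card
      · exact fun y hy => by
          rcases Finset.mem_union.1 (hT'sub hy) with h1 | h1
          · exact Finset.mem_union_left _ (hpa h1)
          · exact Finset.mem_union_right _ h1
      · intro x hx u hu
        rcases Finset.mem_union.1 (hT'cl x hx u hu) with h1 | h1
        · exact Finset.mem_union_left _ (hpa h1)
        · exact Finset.mem_union_right _ h1
    | load m f v =>
      obtain ⟨hm, hinj, hv⟩ := hleg
      have hpa : pebbled (apply (.load m f v) C) ⊆ pebbled C := by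
        intro y hy
        simp only [pebbled] at hy ⊢
        rcases Finset.mem_union.1 hy with hy | hy
        · rw [show allRed (apply (.load m f v) C) = Finset.univ.biUnion (addRed C f v) from rfl,
            allRed_addRed] at hy
          rcases Finset.mem_union.1 hy with hy | hy
          · exact Finset.mem_union_left _ hy
          · obtain ⟨i, _, rfl⟩ := Finset.mem_image.1 hy
            exact Finset.mem_union_right _ (hv i)
        · exact Finset.mem_union_right _ hy
      refine ⟨T', ?_, ?_, ?_⟩
      · rw [computeCount_cons]; simpa [isCompute] using hT'card
      · exact fun y hy => by
          rcases Finset.mem_union.1 (hT'sub hy) with h1 | h1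
          · exact Finset.mem_union_left _ (hpa h1)
          · exact Finset.mem_union_right _ h1
      · intro x hx u hu
        rcases Finset.mem_union.1 (hT'cl x hx u hu) with h1 | h1
        · exact Finset.mem_union_left _ (hpa h1)
        · exact Finset.mem_union_right _ h1
    | removeRed j x =>
      have hpa : pebbled (apply (.removeRed j x) C) ⊆ pebbled C := by
        intro y hy
        simp only [pebbled] at hy ⊢
        rcases Finset.mem_union.1 hy with hy | hy
        · obtain ⟨j', _, hj'⟩ := Finset.mem_biUnion.1 hy
          refine Finset.mem_union_left _ (Finset.mem_biUnion.2 ⟨j', Finset.mem_univ _, ?_⟩)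
          have hj'' : y ∈ Function.update C.red j (C.red j \ {x}) j' := hj'
          rw [Function.update_apply] at hj''
          by_cases h : j' = j
          · rw [if_pos h] at hj''; rw [h]; exact (Finset.mem_sdiff.1 hj'').1
          · rw [if_neg h] at hj''; exact hj''
        · exact Finset.mem_union_right _ hy
      refine ⟨T', ?_, ?_, ?_⟩
      · rw [computeCount_cons]; simpa [isCompute] using hT'card
      · exact fun y hy => by
          rcases Finset.mem_union.1 (hT'sub hy) with h1 | h1
          · exact Finset.mem_union_left _ (hpa h1)
          · exact Finset.mem_union_right _ h1
      · intro x' hx u hu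
        rcases Finset.mem_union.1 (hT'cl x' hx u hu) with h1 | h1
        · exact Finset.mem_union_left _ (hpa h1)
        · exact Finset.mem_union_right _ h1
    | removeBlue x =>
      have hpa : pebbled (apply (.removeBlue x) C) ⊆ pebbled C := by
        intro y hy
        simp only [pebbled] at hy ⊢
        rcases Finset.mem_union.1 hy with hy | hy
        · exact Finset.mem_union_left _ hy
        · exact Finset.mem_union_right _ ((Finset.mem_sdiff.1 hy).1)
      refine ⟨T', ?_, ?_, ?_⟩
      · rw [computeCount_cons]; simpa [isCompute] using hT'card
      · exact fun y hy => by
          rcases Finset.mem_union.1 (hT'sub hy) with h1 | h1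
          · exact Finset.mem_union_left _ (hpa h1)
          · exact Finset.mem_union_right _ h1
      · intro x' hx u hu
        rcases Finset.mem_union.1 (hT'cl x' hx u hu) with h1 | h1
        · exact Finset.mem_union_left _ (hpa h1)
        · exact Finset.mem_union_right _ h1

lemma cost_eq (g : ℕ) (ms : List (Move V k)) :
    cost g ms = g * ioCount ms + computeCount ms := by
  induction ms with
  | nil => simp [cost, ioCount, computeCount]
  | cons mv t ih =>
    have hc : cost g (mv :: t) = moveCost g mv + cost g t := by
      simp [cost]
    rw [hc, ioCount_cons, computeCount_cons, ih, Nat.mul_add]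
    cases mv <;> simp [moveCost, isIO, isCompute] <;> ring

end MPP

end AuxLemmas

/-- If every SPP pebbling strategy of `G` (with `n` nodes) with
memory bound `k·r` uses at least `L` I/O moves, then every MPP pebbling strategy
of `G` with `k` processors, memory bound `r` per processor and I/O cost `g` has
total cost at least `g·L/k + n/k`. -/
theorem stmt4 {V : Type} [Fintype V] [DecidableEq V] (E : V → V → Prop)
    (hdag : IsDag E) (k r g L : ℕ) (hk : 0 < k) (hr0 : 0 < r) (hg : 0 < g) (hL : 0 < L)
    (hSPP : ∀ ss : List (SPP.Move V), SPP.IsPebbling E (k * r) ss → L ≤ SPP.ioCount ss)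
    (ms : List (MPP.Move V k)) (hms : MPP.IsPebbling E r ms) :
    (g : ℝ) * L / k + (Fintype.card V : ℝ) / k ≤ (MPP.cost g ms : ℝ) := by
  obtain ⟨Cf, hrun, hterm⟩ := hms
  -- I/O bound via simulation
  obtain ⟨ss, hss, hio⟩ := MPP.sim_run hrun
  have hempty : MPP.allRed (MPP.init V k) = ∅ := by
    ext x; simp [MPP.allRed, MPP.init]
  have hinit : (⟨MPP.allRed (MPP.init V k), (MPP.init V k).blue⟩ : SPP.Conf V) = SPP.init V := by
    rw [hempty]; rfl
  rw [hinit] at hss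
  have hpebb : SPP.IsPebbling E (k * r) ss := by
    refine ⟨⟨MPP.allRed Cf, Cf.blue⟩, hss, ?_⟩
    intro v hv
    rcases hterm v hv with h | ⟨j, h⟩
    · exact Or.inl h
    · exact Or.inr (MPP.mem_allRed h)
  have hL1 : L ≤ k * MPP.ioCount ms := le_trans (hSPP ss hpebb) hio
  -- compute bound
  obtain ⟨T, hTcard, hTsub, hTcl⟩ := MPP.pebbled_key hrun
  have hpinit : MPP.pebbled (MPP.init V k) = ∅ := by
    ext x; simp [MPP.pebbled, MPP.allRed, MPP.init]
  rw [hpinit, Finset.empty_union] at hTsub hTcl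
  -- every node is in T
  have hwf : WellFounded (fun a b : V => E b a) := by
    have ht : IsTrans V (Relation.TransGen (Function.swap E)) := ⟨fun _ _ _ => Relation.TransGen.trans⟩
    have hi : IsIrrefl V (Relation.TransGen (Function.swap E)) :=
      ⟨fun a h => hdag a (Relation.transGen_swap.1 h)⟩
    exact @Subrelation.wf V (Relation.TransGen (Function.swap E)) (fun a b => E b a)
      (fun {a b} h => Relation.TransGen.single h)
      (Finite.wellFounded_of_trans_of_irrefl _)
  have hall : ∀ x : V, x ∈ T := by
    intro x
    induction x using hwf.induction with
    | _ x ih =>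
      by_cases hsink : MPP.IsSink E x
      · exact hTsub (by
          rcases hterm x hsink with h | ⟨j, h⟩
          · exact Finset.mem_union_right _ h
          · exact Finset.mem_union_left _ (MPP.mem_allRed h))
      · simp only [MPP.IsSink, not_forall, not_not] at hsink
        obtain ⟨u, hu⟩ := hsink
        exact hTcl u (ih u hu) x hu
  have hn : Fintype.card V ≤ k * MPP.computeCount ms := by
    have : (Finset.univ : Finset V) ⊆ T := fun x _ => hall x
    calc Fintype.card V = (Finset.univ : Finset V).card := (Finset.card_univ).symm
      _ ≤ T.card := Finset.card_le_card this
      _ ≤ k * MPP.computeCount ms := hTcard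
  -- arithmetic
  have hcost : MPP.cost g ms = g * MPP.ioCount ms + MPP.computeCount ms := MPP.cost_eq g ms
  have hk' : (0 : ℝ) < k := by exact_mod_cast hk
  rw [← add_div, div_le_iff₀ hk']
  have hL1' : (L : ℝ) ≤ k * MPP.ioCount ms := by exact_mod_cast hL1
  have hn' : (Fintype.card V : ℝ) ≤ k * MPP.computeCount ms := by exact_mod_cast hn
  have hcost' : (MPP.cost g ms : ℝ) = g * MPP.ioCount ms + MPP.computeCount ms := by
    exact_mod_cast hcost
  have hg' : (0 : ℝ) ≤ g := by positivity
  rw [hcost']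
  nlinarith [mul_le_mul_of_nonneg_left hL1' hg']
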